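/- Let A be a commutative ring, f ∈ A a non-zero-divisor, and N a cochain complex of f-torsion-free A-modules in degrees ≥ 0. If the cohomology H^n(N) is f-torsion-free for all n, then the inclusion η_f N ↪ N induces an isomorphism H^n(η_f N) ≅ f^n · H^n(N) ≅ H^n(N) for all n; in particular η_f N ↪ N is a quasi-isomorphism up to the isomorphisms given by multiplication by f^n in each degree. -/

import Mathlib

/-- Cohomology of `M1 --D1--> M2 --D2--> M3`: `ker D2 / im D1`. -/
abbrev Homol {K : Type*} [CommRing K] {M1 M2 M3 : Type*}
    [AddCommGroup M1] [AddCommGroup M2] [AddCommGroup M3]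
    [Module K M1] [Module K M2] [Module K M3]
    (D1 : M1 →ₗ[K] M2) (D2 : M2 →ₗ[K] M3) :=
  LinearMap.ker D2 ⧸ (LinearMap.range D1).comap (LinearMap.ker D2).subtype

/-- Let `A` be a commutative ring, `f ∈ A` a non-zero-divisor, and `N` a
cochain complex of `f`-torsion-free `A`-modules in degrees `≥ 0`.  If `H^n(N)` is
`f`-torsion-free for all `n`, then the inclusion `η_f N ↪ N` induces an isomorphism
`H^n(η_f N) ≅ H^n(N)` for all `n`, given on classes by dividing by `f^n`
(`[f^n·y] ↦ [y]`).  (`H^0` is the kernel of the first differential, and `H^{n+1}` is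
`ker/im` at degree `n+1`.) -/
theorem eta_quasi_iso_of_torsionFree_cohomology
    {A : Type*} [CommRing A] (f : A) (hf : f ∈ nonZeroDivisors A)
    (N : ℕ → Type*) [∀ n, AddCommGroup (N n)] [∀ n, Module A (N n)]
    (d : ∀ n, N n →ₗ[A] N (n + 1))
    (hdd : ∀ n (x : N n), d (n + 1) (d n x) = 0)
    (htf : ∀ n (x : N n), f • x = 0 → x = 0)
    (eta : ∀ n, Submodule A (N n))
    (heta : ∀ n (x : N n), x ∈ eta n ↔
      (∃ y : N n, x = f ^ n • y) ∧ ∃ z : N (n + 1), d n x = f ^ (n + 1) • z)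
    -- the differential of `N` restricted to the subcomplex `η_f N`
    (dres : ∀ n, eta n →ₗ[A] eta (n + 1))
    (hdres : ∀ n (x : eta n), (dres n x : N (n + 1)) = d n (x : N n))
    -- `f`-torsion-freeness of the cohomology of `N`
    (hH0 : ∀ x : LinearMap.ker (d 0), f • x = 0 → x = 0)
    (hH : ∀ n (x : Homol (d n) (d (n + 1))), f • x = 0 → x = 0) :
    (∃ e0 : LinearMap.ker (dres 0) ≃ₗ[A] LinearMap.ker (d 0),
      ∀ (x : N 0) (hx : x ∈ eta 0) (hk : (⟨x, hx⟩ : eta 0) ∈ LinearMap.ker (dres 0))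
        (hk' : x ∈ LinearMap.ker (d 0)),
        e0 ⟨⟨x, hx⟩, hk⟩ = ⟨x, hk'⟩) ∧
    ∀ n, ∃ e : Homol (dres n) (dres (n + 1)) ≃ₗ[A] Homol (d n) (d (n + 1)),
      ∀ (y : N (n + 1)) (h1 : f ^ (n + 1) • y ∈ eta (n + 1))
        (hk : (⟨f ^ (n + 1) • y, h1⟩ : eta (n + 1)) ∈ LinearMap.ker (dres (n + 1)))
        (hk' : y ∈ LinearMap.ker (d (n + 1))),
        e (Submodule.Quotient.mk ⟨⟨f ^ (n + 1) • y, h1⟩, hk⟩) =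
          Submodule.Quotient.mk ⟨y, hk'⟩ := by

  -- `f ^ k` acts injectively on every `N m`
  have hinj : ∀ (m k : ℕ) (a : N m), f ^ k • a = 0 → a = 0 := by
    intro m k
    induction k with
    | zero => intro a h; simpa using h
    | succ k ih =>
      intro a h
      rw [pow_succ, mul_smul] at h
      exact htf m a (ih (f • a) h)
  constructor
  · -- degree 0
    have hmem0 : ∀ x : N 0, d 0 x = 0 → x ∈ eta 0 := by
      intro x hx
      rw [heta]
      exact ⟨⟨x, by simp⟩, ⟨0, by simp [hx]⟩⟩
    have hker0 : ∀ (x : N 0) (hx : d 0 x = 0),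
        (⟨x, hmem0 x hx⟩ : eta 0) ∈ LinearMap.ker (dres 0) := by
      intro x hx
      rw [LinearMap.mem_ker]
      apply Subtype.ext
      rw [hdres]
      simpa using hx
    let Φ : LinearMap.ker (d 0) →ₗ[A] LinearMap.ker (dres 0) :=
      { toFun := fun y => ⟨⟨(y : N 0), hmem0 y (LinearMap.mem_ker.mp y.2)⟩,
          hker0 y (LinearMap.mem_ker.mp y.2)⟩
        map_add' := fun a b => by ext; rfl
        map_smul' := fun c a => by ext; rfl }
    have hbij : Function.Bijective Φ := by
      constructor
      · intro a b h
        apply Subtype.ext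
        exact congrArg (fun z => ((z : eta 0) : N 0)) (congrArg Subtype.val h)
      · rintro ⟨⟨x, hx⟩, hk⟩
        have hdx : d 0 x = 0 := by
          have h1 := congrArg Subtype.val (LinearMap.mem_ker.mp hk)
          rw [hdres] at h1
          simpa using h1
        exact ⟨⟨x, LinearMap.mem_ker.mpr hdx⟩, by apply Subtype.ext; apply Subtype.ext; rfl⟩
    refine ⟨(LinearEquiv.ofBijective Φ hbij).symm, ?_⟩
    intro x hx hk hk'
    rw [LinearEquiv.symm_apply_eq]
    apply Subtype.ext; apply Subtype.ext; rfl
  · intro n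
    have hmem : ∀ y : N (n + 1), d (n + 1) y = 0 → f ^ (n + 1) • y ∈ eta (n + 1) := by
      intro y hy
      rw [heta]
      exact ⟨⟨y, rfl⟩, ⟨0, by simp [hy]⟩⟩
    have hker : ∀ (y : N (n + 1)) (hy : d (n + 1) y = 0),
        (⟨f ^ (n + 1) • y, hmem y hy⟩ : eta (n + 1)) ∈ LinearMap.ker (dres (n + 1)) := by
      intro y hy
      rw [LinearMap.mem_ker]
      apply Subtype.ext
      rw [hdres]
      simp [hy]
    -- the linear map ker (d (n+1)) → ker (dres (n+1)), y ↦ f^(n+1) • y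
    let Φlin : LinearMap.ker (d (n + 1)) →ₗ[A] LinearMap.ker (dres (n + 1)) :=
      { toFun := fun y => ⟨⟨f ^ (n + 1) • (y : N (n + 1)),
          hmem y (LinearMap.mem_ker.mp y.2)⟩, hker y (LinearMap.mem_ker.mp y.2)⟩
        map_add' := fun a b => by apply Subtype.ext; apply Subtype.ext; simp
        map_smul' := fun c a => by
          apply Subtype.ext; apply Subtype.ext
          show f ^ (n + 1) • (c • (a : N (n + 1))) = c • (f ^ (n + 1) • (a : N (n + 1)))
          rw [smul_comm] }
    set p : Submodule A (LinearMap.ker (d (n + 1))) :=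
      (LinearMap.range (d n)).comap (LinearMap.ker (d (n + 1))).subtype with hp
    set p' : Submodule A (LinearMap.ker (dres (n + 1))) :=
      (LinearMap.range (dres n)).comap (LinearMap.ker (dres (n + 1))).subtype with hp'
    let q : LinearMap.ker (d (n + 1)) →ₗ[A] Homol (dres n) (dres (n + 1)) :=
      p'.mkQ.comp Φlin
    have hpq : p ≤ LinearMap.ker q := by
      rintro ⟨y, hy⟩ hmemp
      obtain ⟨u, hu⟩ := Submodule.mem_comap.mp hmemp
      -- hu : d n u = y
      rw [LinearMap.mem_ker]
      simp only [q, LinearMap.comp_apply, Submodule.mkQ_apply]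
      rw [Submodule.Quotient.mk_eq_zero]
      have hwmem : f ^ (n + 1) • u ∈ eta n := by
        rw [heta]
        refine ⟨⟨f • u, by rw [pow_succ, mul_smul]⟩, ⟨d n u, ?_⟩⟩
        rw [map_smul]
      refine Submodule.mem_comap.mpr ⟨⟨f ^ (n + 1) • u, hwmem⟩, ?_⟩
      apply Subtype.ext
      rw [hdres]
      simp only [Submodule.coe_subtype]
      show d n (f ^ (n + 1) • u) = _
      rw [map_smul, hu]
      rfl
    let Φ : Homol (d n) (d (n + 1)) →ₗ[A] Homol (dres n) (dres (n + 1)) :=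
      p.liftQ q hpq
    have hbij : Function.Bijective Φ := by
      constructor
      · rw [← LinearMap.ker_eq_bot, LinearMap.ker_eq_bot']
        intro m hm
        induction m using Submodule.Quotient.induction_on with
        | _ y =>
          rcases y with ⟨y, hy⟩
          -- hm : Φ (mk ⟨y, hy⟩) = 0
          rw [show Φ (Submodule.Quotient.mk ⟨y, hy⟩) = q ⟨y, hy⟩ from
            Submodule.liftQ_apply p q ⟨y, hy⟩] at hm
          simp only [q, LinearMap.comp_apply, Submodule.mkQ_apply,
            Submodule.Quotient.mk_eq_zero] at hm
          obtain ⟨w, hw⟩ := Submodule.mem_comap.mp hm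
          have hw1 : d n ((w : eta n) : N n) = f ^ (n + 1) • y := by
            have := congrArg Subtype.val hw
            rw [hdres] at this
            simpa [Φlin] using this
          obtain ⟨⟨u, hu⟩, -⟩ := (heta n ((w : eta n) : N n)).mp (w : eta n).2
          -- w = f^n • u, so f^n • d n u = f^(n+1) • y, so d n u = f • y
          have hdu : d n u = f • y := by
            have h0 : f ^ n • (d n u - f • y) = 0 := by
              rw [smul_sub, ← map_smul, ← hu, hw1, pow_succ, mul_smul, sub_self]
            exact sub_eq_zero.mp (hinj _ n _ h0)
          have hfy : f • (Submodule.Quotient.mk ⟨y, hy⟩ :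
              Homol (d n) (d (n + 1))) = 0 := by
            rw [← Submodule.Quotient.mk_smul, Submodule.Quotient.mk_eq_zero]
            exact Submodule.mem_comap.mpr ⟨u, hdu⟩
          exact hH n _ hfy
      · intro m
        induction m using Submodule.Quotient.induction_on with
        | _ x =>
          rcases x with ⟨⟨x, hx⟩, hk⟩
          obtain ⟨⟨y, hyx⟩, -⟩ := (heta (n + 1) x).mp hx
          have hdx : d (n + 1) x = 0 := by
            have h1 := congrArg Subtype.val (LinearMap.mem_ker.mp hk)
            rw [hdres] at h1
            simpa using h1
          have hdy : d (n + 1) y = 0 := by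
            apply hinj (n + 2) (n + 1)
            rw [← map_smul, ← hyx, hdx]
          refine ⟨Submodule.Quotient.mk ⟨y, LinearMap.mem_ker.mpr hdy⟩, ?_⟩
          rw [show Φ (Submodule.Quotient.mk ⟨y, LinearMap.mem_ker.mpr hdy⟩) =
              q ⟨y, LinearMap.mem_ker.mpr hdy⟩ from
            Submodule.liftQ_apply p q _]
          simp only [q, LinearMap.comp_apply, Submodule.mkQ_apply]
          congr 1
          apply Subtype.ext; apply Subtype.ext
          exact hyx.symm
    refine ⟨(LinearEquiv.ofBijective Φ hbij).symm, ?_⟩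
    intro y h1 hk hk'
    rw [LinearEquiv.symm_apply_eq, LinearEquiv.ofBijective_apply]
    rw [show Φ (Submodule.Quotient.mk ⟨y, hk'⟩) = q ⟨y, hk'⟩ from
      Submodule.liftQ_apply p q _]
    simp only [q, LinearMap.comp_apply, Submodule.mkQ_apply]
    congr 1
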